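/- The regular part C of the Green's function can be symmetrized: there exists a symmetric matrix C ∈ M_m(ℝ) satisfying (P − Λ) C = (1/(1 − p^{−1})) (P Λ^{−1} − (1/m) 𝟙𝟙ᵀ). -/

import Mathlib

/-- The matrix `P i j = (1 − p⁻¹) p^{−|i−j|}`. -/
noncomputable def Pmat (p m : ℕ) : Matrix (Fin m) (Fin m) ℝ :=
  Matrix.of fun i j => (1 - (p : ℝ)⁻¹) * (p : ℝ) ^ (-|(i : ℤ) - (j : ℤ)|)

/-- The diagonal entries `Λ_i = Σ_j P i j`. -/
noncomputable def LamDiag (p m : ℕ) (i : Fin m) : ℝ := ∑ j, Pmat p m i j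

open Matrix Finset

/-- The Laplacian-type matrix `A = P − Λ`. -/
noncomputable def Amat (p m : ℕ) : Matrix (Fin m) (Fin m) ℝ :=
  Pmat p m - Matrix.diagonal (LamDiag p m)

section Aux

variable (p m : ℕ)

lemma Pmat_comm (i j : Fin m) : Pmat p m i j = Pmat p m j i := by
  simp [Pmat, abs_sub_comm]

lemma Pmat_pos (hp : p.Prime) (i j : Fin m) : 0 < Pmat p m i j := by
  have h1 : (1:ℝ) < p := by exact_mod_cast hp.one_lt
  have h0 : (0:ℝ) < p := by linarith
  have h2 : (p:ℝ)⁻¹ < 1 := by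
    rw [inv_lt_one_iff₀]; right; exact h1
  have : (0:ℝ) < 1 - (p:ℝ)⁻¹ := by linarith
  exact mul_pos this (zpow_pos h0 _)

lemma LamDiag_pos (hp : p.Prime) (hm : 1 ≤ m) (i : Fin m) : 0 < LamDiag p m i := by
  haveI : Nonempty (Fin m) := ⟨⟨0, hm⟩⟩
  exact Finset.sum_pos (fun j _ => Pmat_pos p m hp i j) Finset.univ_nonempty

lemma Amat_apply (i j : Fin m) :
    Amat p m i j = Pmat p m i j - if i = j then LamDiag p m i else 0 := by
  simp [Amat, Matrix.diagonal_apply, Matrix.sub_apply]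

lemma Amat_comm (i j : Fin m) : Amat p m i j = Amat p m j i := by
  rcases eq_or_ne i j with rfl | h
  · rfl
  · simp [Amat_apply, h, h.symm, Pmat_comm p m i j]

lemma Amat_rowsum (i : Fin m) : ∑ j, Amat p m i j = 0 := by
  simp [Amat_apply, Finset.sum_sub_distrib, Finset.sum_ite_eq, LamDiag]

lemma Amat_colsum (j : Fin m) : ∑ i, Amat p m i j = 0 := by
  rw [Finset.sum_congr rfl (fun i _ => Amat_comm p m i j)]
  exact Amat_rowsum p m j

lemma Pmat_colsum (j : Fin m) : ∑ i, Pmat p m i j = LamDiag p m j := by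
  rw [Finset.sum_congr rfl (fun i _ => Pmat_comm p m i j)]; rfl

/-- Any vector in the kernel of `A` is constant. -/
lemma Amat_ker (hp : p.Prime) (x : Fin m → ℝ)
    (hx : Amat p m *ᵥ x = 0) (i j : Fin m) : x i = x j := by
  have heq : ∀ i, ∑ k, Pmat p m i k * x k = LamDiag p m i * x i := by
    intro i
    have h := congrFun hx i
    simp only [Matrix.mulVec, dotProduct, Amat_apply, sub_mul, Finset.sum_sub_distrib,
      Pi.zero_apply, ite_mul, zero_mul, Finset.sum_ite_eq, Finset.mem_univ, if_true] at h
    linarith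
  have hS : ∑ i, ∑ k, Pmat p m i k * (x i - x k)^2 = 0 := by
    have e : ∀ i k, Pmat p m i k * (x i - x k)^2 =
        Pmat p m i k * x i ^ 2 - 2 * (Pmat p m i k * x k) * x i + Pmat p m i k * x k ^ 2 :=
      fun i k => by ring
    simp only [e, Finset.sum_add_distrib, Finset.sum_sub_distrib]
    have h1 : ∀ i, ∑ k, Pmat p m i k * x i ^ 2 = LamDiag p m i * x i ^ 2 := by
      intro i; rw [← Finset.sum_mul]; rfl
    have h2 : ∀ i, ∑ k, 2 * (Pmat p m i k * x k) * x i = 2 * (LamDiag p m i * x i) * x i := by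
      intro i
      rw [Finset.sum_congr rfl (fun k _ => by ring :
        ∀ k ∈ Finset.univ, 2 * (Pmat p m i k * x k) * x i = (Pmat p m i k * x k) * (2 * x i)),
        ← Finset.sum_mul, heq i]; ring
    have h3 : ∑ i, ∑ k, Pmat p m i k * x k ^ 2 = ∑ k, LamDiag p m k * x k ^ 2 := by
      rw [Finset.sum_comm]
      exact Finset.sum_congr rfl fun k _ => by rw [← Finset.sum_mul, Pmat_colsum]
    rw [Finset.sum_congr rfl (fun i _ => h1 i), Finset.sum_congr rfl (fun i _ => h2 i), h3]
    have : ∀ i, 2 * (LamDiag p m i * x i) * x i = 2 * (LamDiag p m i * x i ^ 2) := fun i => by ring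
    simp only [this]
    rw [← Finset.mul_sum]
    ring
  have hnn : ∀ i ∈ Finset.univ, (0:ℝ) ≤ ∑ k, Pmat p m i k * (x i - x k)^2 := by
    intro i _
    exact Finset.sum_nonneg fun k _ => mul_nonneg (Pmat_pos p m hp i k).le (sq_nonneg _)
  have hrow := (Finset.sum_eq_zero_iff_of_nonneg hnn).mp hS i (Finset.mem_univ i)
  have hterm := (Finset.sum_eq_zero_iff_of_nonneg
    (fun k _ => mul_nonneg (Pmat_pos p m hp i k).le (sq_nonneg _))).mp hrow j (Finset.mem_univ j)
  have h0 : (x i - x j)^2 = 0 :=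
    (mul_eq_zero.mp hterm).resolve_left (Pmat_pos p m hp i j).ne'
  have := sq_eq_zero_iff.mp h0
  linarith

/-- `A x = b` is solvable whenever the coordinates of `b` sum to zero. -/
lemma Amat_surj (hp : p.Prime) (hm : 1 ≤ m) (b : Fin m → ℝ) (hb : ∑ i, b i = 0) :
    ∃ x, Amat p m *ᵥ x = b := by
  classical
  haveI : Nonempty (Fin m) := ⟨⟨0, hm⟩⟩
  set f : (Fin m → ℝ) →ₗ[ℝ] (Fin m → ℝ) := (Amat p m).mulVecLin with hf
  set σ : (Fin m → ℝ) →ₗ[ℝ] ℝ := ∑ i, LinearMap.proj i with hσdef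
  have hσ : ∀ y : Fin m → ℝ, σ y = ∑ i, y i := fun y => by
    simp [hσdef, LinearMap.proj]
  have hones : f (fun _ => 1) = 0 := by
    ext i
    simp only [hf, Matrix.mulVecLin_apply, Matrix.mulVec, dotProduct, mul_one, Pi.zero_apply]
    exact Amat_rowsum p m i
  have hdim : Module.finrank ℝ (Fin m → ℝ) = m := by simp
  have hker : LinearMap.ker f = Submodule.span ℝ {(fun _ => 1 : Fin m → ℝ)} := by
    apply le_antisymm
    · intro x hx
      rw [Submodule.mem_span_singleton]
      refine ⟨x ⟨0, hm⟩, funext fun j => ?_⟩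
      simp only [Pi.smul_apply, smul_eq_mul, mul_one]
      exact Amat_ker p m hp x hx ⟨0, hm⟩ j
    · rw [Submodule.span_le, Set.singleton_subset_iff]
      exact hones
  have hker1 : Module.finrank ℝ (LinearMap.ker f) = 1 := by
    rw [hker]
    exact finrank_span_singleton (by
      intro h
      have := congrFun h ⟨0, hm⟩
      norm_num at this)
  have hrn := LinearMap.finrank_range_add_finrank_ker f
  rw [hdim, hker1] at hrn
  have hσsurj : Function.Surjective σ := by
    intro cc
    refine ⟨fun _ => cc / m, ?_⟩
    rw [hσ]
    have hm0 : (m:ℝ) ≠ 0 := by positivity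
    field_simp
    rw [Finset.sum_const, Finset.card_univ, Fintype.card_fin, nsmul_eq_mul]; field_simp
  have hkσ : Module.finrank ℝ (LinearMap.ker σ) = m - 1 := by
    have h2 := LinearMap.finrank_range_add_finrank_ker σ
    rw [LinearMap.range_eq_top.mpr hσsurj, hdim] at h2
    simp only [finrank_top, Module.finrank_self] at h2
    omega
  have hle : LinearMap.range f ≤ LinearMap.ker σ := by
    rintro _ ⟨x, rfl⟩
    rw [LinearMap.mem_ker, hσ]
    simp only [hf, Matrix.mulVecLin_apply, Matrix.mulVec, dotProduct]
    rw [Finset.sum_comm]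
    rw [Finset.sum_congr rfl (fun j _ => by rw [← Finset.sum_mul, Amat_colsum, zero_mul] :
      ∀ j ∈ Finset.univ, ∑ i, Amat p m i j * x j = 0)]
    simp
  have hre : LinearMap.range f = LinearMap.ker σ :=
    Submodule.eq_of_le_of_finrank_le hle (by rw [hkσ]; omega)
  have hbmem : b ∈ LinearMap.range f := by
    rw [hre, LinearMap.mem_ker, hσ]; exact hb
  obtain ⟨x, hx⟩ := hbmem
  exact ⟨x, hx⟩

end Aux

/-- The regular part `C` of the Green's function can be symmetrized:
there exists a symmetric matrix `C` satisfying
`(P − Λ) C = (1/(1 − p⁻¹))(P Λ⁻¹ − (1/m) 𝟙𝟙ᵀ)`. -/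
theorem regular_part_symmetrizable (p : ℕ) (hp : p.Prime) (m : ℕ) (hm : 1 ≤ m) :
    ∃ C : Matrix (Fin m) (Fin m) ℝ, C.IsSymm ∧
      (Pmat p m - Matrix.diagonal (LamDiag p m)) * C =
        (1 / (1 - (p : ℝ)⁻¹)) •
          (Pmat p m * Matrix.diagonal (fun i => (LamDiag p m i)⁻¹) -
            (1 / (m : ℝ)) • Matrix.of (fun _ _ => (1 : ℝ))) := by
  classical
  have hA : Pmat p m - Matrix.diagonal (LamDiag p m) = Amat p m := rfl
  rw [hA]
  set c : ℝ := 1 / (1 - (p : ℝ)⁻¹) with hc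
  set B : Matrix (Fin m) (Fin m) ℝ :=
    c • (Pmat p m * Matrix.diagonal (fun i => (LamDiag p m i)⁻¹) -
      (1 / (m : ℝ)) • Matrix.of (fun _ _ => (1 : ℝ))) with hB
  have hΛ : ∀ i, LamDiag p m i ≠ 0 := fun i => (LamDiag_pos p m hp hm i).ne'
  have hm0 : (m : ℝ) ≠ 0 := by positivity
  have hBapply : ∀ i j, B i j = c * (Pmat p m i j * (LamDiag p m j)⁻¹ - 1 / m) := by
    intro i j
    simp [hB, Matrix.smul_apply, Matrix.sub_apply, Matrix.mul_diagonal, smul_eq_mul]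
  have hBcol : ∀ j, ∑ i, B i j = 0 := by
    intro j
    simp only [hBapply]
    rw [← Finset.mul_sum, Finset.sum_sub_distrib, ← Finset.sum_mul, Pmat_colsum,
      mul_inv_cancel₀ (hΛ j), Finset.sum_const, Finset.card_univ, Fintype.card_fin]
    simp [hm0]
  -- choose `C0` with `A * C0 = B`
  have hsolex : ∀ j, ∃ x, Amat p m *ᵥ x = fun i => B i j :=
    fun j => Amat_surj p m hp hm _ (hBcol j)
  choose sol hsol using hsolex
  set C0 : Matrix (Fin m) (Fin m) ℝ := Matrix.of fun i j => sol j i with hC0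
  have hAC0 : ∀ i j, (Amat p m * C0) i j = B i j := by
    intro i j
    rw [Matrix.mul_apply]
    exact congrFun (hsol j) i
  -- `B * A` is symmetric
  have hPsym : (Pmat p m)ᵀ = Pmat p m := by
    ext i j; exact Pmat_comm p m j i
  have hAsym : (Amat p m)ᵀ = Amat p m := by
    ext i j; exact Amat_comm p m j i
  have hJA : (Matrix.of (fun _ _ => (1:ℝ)) : Matrix (Fin m) (Fin m) ℝ) * Amat p m = 0 := by
    ext i j
    rw [Matrix.mul_apply]
    simp only [Matrix.of_apply, one_mul, Matrix.zero_apply]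
    exact Amat_colsum p m j
  have hDinv : Matrix.diagonal (fun i => (LamDiag p m i)⁻¹) * Matrix.diagonal (LamDiag p m)
      = (1 : Matrix (Fin m) (Fin m) ℝ) := by
    rw [Matrix.diagonal_mul_diagonal]
    have hfun : (fun i => (LamDiag p m i)⁻¹ * LamDiag p m i) = fun _ => (1:ℝ) :=
      funext fun i => inv_mul_cancel₀ (hΛ i)
    rw [hfun, Matrix.diagonal_one]
  have hBA : B * Amat p m =
      c • (Pmat p m * Matrix.diagonal (fun i => (LamDiag p m i)⁻¹) * Pmat p m - Pmat p m) := by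
    rw [hB, Matrix.smul_mul, Matrix.sub_mul, Matrix.smul_mul, hJA, smul_zero, sub_zero]
    congr 1
    rw [Matrix.mul_assoc, show Amat p m = Pmat p m - Matrix.diagonal (LamDiag p m) from rfl,
      Matrix.mul_sub, Matrix.mul_sub, hDinv, Matrix.mul_one, ← Matrix.mul_assoc]
  have hBAsym : (B * Amat p m)ᵀ = B * Amat p m := by
    rw [hBA, Matrix.transpose_smul, Matrix.transpose_sub, Matrix.transpose_mul,
      Matrix.transpose_mul, Matrix.diagonal_transpose, hPsym]
    rw [Matrix.mul_assoc]
  -- `D := C0 * A - Bᵀ` has constant columns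
  set D : Matrix (Fin m) (Fin m) ℝ := C0 * Amat p m - Bᵀ with hD
  have hAC0' : Amat p m * C0 = B := by ext i j; exact hAC0 i j
  have hAD : Amat p m * D = 0 := by
    rw [hD, Matrix.mul_sub, ← Matrix.mul_assoc, hAC0']
    have : Amat p m * Bᵀ = B * Amat p m := by
      calc Amat p m * Bᵀ = (B * (Amat p m)ᵀ)ᵀ := by
            rw [Matrix.transpose_mul, Matrix.transpose_transpose]
        _ = (B * Amat p m)ᵀ := by rw [hAsym]
        _ = B * Amat p m := hBAsym
    rw [this, sub_self]
  set i0 : Fin m := ⟨0, hm⟩ with hi0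
  have hDconst : ∀ i j, D i j = D i0 j := by
    intro i j
    have hcol : Amat p m *ᵥ (fun k => D k j) = 0 := by
      funext i'
      have := congrFun (congrFun hAD i') j
      simpa [Matrix.mulVec, dotProduct, Matrix.mul_apply] using this
    exact Amat_ker p m hp _ hcol i i0
  set v : Fin m → ℝ := fun j => D i0 j with hv
  have hvsum : ∑ j, v j = 0 := by
    simp only [hv, hD, Matrix.sub_apply, Matrix.transpose_apply, Finset.sum_sub_distrib]
    have h1 : ∑ j, (C0 * Amat p m) i0 j = 0 := by
      simp only [Matrix.mul_apply]
      rw [Finset.sum_comm]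
      rw [Finset.sum_congr rfl (fun k _ => by rw [← Finset.mul_sum, Amat_rowsum, mul_zero] :
        ∀ k ∈ Finset.univ, ∑ j, C0 i0 k * Amat p m k j = 0)]
      simp
    rw [h1, hBcol i0, sub_self]
  obtain ⟨w, hw⟩ := Amat_surj p m hp hm v hvsum
  refine ⟨Matrix.of fun i j => (C0 i j + C0 j i - w i - w j) / 2, ?_, ?_⟩
  · ext i j
    simp only [Matrix.transpose_apply, Matrix.of_apply]
    ring
  · ext i j
    rw [Matrix.mul_apply]
    simp only [Matrix.of_apply]
    have split : ∀ k, Amat p m i k * ((C0 k j + C0 j k - w k - w j) / 2) =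
        (Amat p m i k * C0 k j + Amat p m i k * C0 j k
          - Amat p m i k * w k - Amat p m i k * w j) / 2 := fun k => by ring
    simp only [split]
    rw [← Finset.sum_div, Finset.sum_sub_distrib, Finset.sum_sub_distrib,
      Finset.sum_add_distrib]
    have T1 : ∑ k, Amat p m i k * C0 k j = B i j := by
      rw [← Matrix.mul_apply]; exact hAC0 i j
    have T2 : ∑ k, Amat p m i k * C0 j k = v i + B i j := by
      have h : ∑ k, Amat p m i k * C0 j k = (C0 * Amat p m) j i := by
        rw [Matrix.mul_apply]
        exact Finset.sum_congr rfl fun k _ => by rw [Amat_comm p m i k]; ring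
      rw [h]
      have h2 : (C0 * Amat p m) j i = D j i + B i j := by
        simp [hD, Matrix.sub_apply, Matrix.transpose_apply]
      rw [h2, hDconst j i]
    have T3 : ∑ k, Amat p m i k * w k = v i := by
      have := congrFun hw i
      simpa [Matrix.mulVec, dotProduct] using this
    have T4 : ∑ k, Amat p m i k * w j = 0 := by
      rw [← Finset.sum_mul, Amat_rowsum, zero_mul]
    rw [T1, T2, T3, T4]
    ring
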